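/- The probability that l samples drawn independently from (not necessarily identical) ε-flat distributions over a finite sample space Φ are all pairwise distinct is at least 2^(−l²ε), provided l ≤ 1 + 1/(2ε). -/

import Mathlib

open MeasureTheory Finset
open scoped ENNReal NNReal

lemma two_rpow_neg_le {x : ℝ} (hx0 : 0 ≤ x) (hx : x ≤ 1/2) :
    (2:ℝ) ^ (-(2*x)) ≤ 1 - x := by
  have h := convexOn_exp.2 (Set.mem_univ (0:ℝ)) (Set.mem_univ (-Real.log 2))
    (show (0:ℝ) ≤ 1 - 2*x by linarith) (show (0:ℝ) ≤ 2*x by linarith) (by ring)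
  simp only [smul_eq_mul, mul_zero, zero_add, Real.exp_zero] at h
  have e2 : Real.exp (-Real.log 2) = 1/2 := by
    rw [Real.exp_neg, Real.exp_log (by norm_num)]; norm_num
  rw [e2] at h
  have e3 : (2:ℝ) ^ (-(2*x)) = Real.exp (2 * x * -Real.log 2) := by
    rw [Real.rpow_def_of_pos (by norm_num)]; ring_nf
  rw [e3]
  calc Real.exp (2*x * -Real.log 2) ≤ (1 - 2*x) * 1 + 2*x * (1/2) := h
    _ = 1 - x := by ring

lemma sum_range_id_real (l : ℕ) : ∑ j ∈ range l, (j:ℝ) = (l:ℝ) * ((l:ℝ) - 1) / 2 := by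
  induction l with
  | zero => simp
  | succ n ih => rw [Finset.sum_range_succ, ih]; push_cast; ring

lemma real_prod_bound (l : ℕ) (ε : ℝ) (hε : 0 < ε) (hl : (l : ℝ) ≤ 1 + 1 / (2 * ε)) :
    (2:ℝ) ^ (-(l : ℝ) ^ 2 * ε) ≤ ∏ j ∈ range l, (1 - (j:ℝ) * ε) := by
  have hjhalf : ∀ j ∈ range l, (j:ℝ) * ε ≤ 1/2 := by
    intro j hj
    rw [mem_range] at hj
    have hj' : (j:ℝ) ≤ (l:ℝ) - 1 := by
      have : (j:ℝ) + 1 ≤ (l:ℝ) := by exact_mod_cast hj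
      linarith
    have h2 : (j:ℝ) ≤ 1/(2*ε) := by linarith
    have h3 : (j:ℝ) * ε ≤ (1/(2*ε)) * ε :=
      mul_le_mul_of_nonneg_right h2 hε.le
    have h4 : (1/(2*ε)) * ε = 1/2 := by field_simp
    linarith
  calc (2:ℝ) ^ (-(l : ℝ) ^ 2 * ε)
      ≤ (2:ℝ) ^ (∑ j ∈ range l, -(2 * ((j:ℝ) * ε))) := by
        apply Real.rpow_le_rpow_of_exponent_le (by norm_num)
        have e1 : ∑ j ∈ range l, -(2 * ((j:ℝ) * ε)) = -(2*ε) * ∑ j ∈ range l, (j:ℝ) := by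
          rw [Finset.mul_sum]; apply Finset.sum_congr rfl; intro j _; ring
        rw [e1, sum_range_id_real]
        nlinarith [mul_nonneg hε.le (Nat.cast_nonneg l : (0:ℝ) ≤ l)]
    _ = ∏ j ∈ range l, (2:ℝ) ^ (-(2 * ((j:ℝ) * ε))) := by
        simp only [Real.rpow_def_of_pos (show (0:ℝ) < 2 by norm_num)]
        rw [Finset.mul_sum, Real.exp_sum]
    _ ≤ ∏ j ∈ range l, (1 - (j:ℝ) * ε) := by
        apply Finset.prod_le_prod
        · intro j _; positivity
        · intro j hj
          exact two_rpow_neg_le (by positivity) (hjhalf j hj)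

open Classical in
lemma key_sum {Φ : Type*} [Fintype Φ] (ε : ℝ≥0∞) :
    ∀ (n : ℕ) (P : Fin n → PMF Φ), (∀ j s, P j s ≤ ε) →
      ∏ j ∈ Finset.range n, (1 - (j : ℝ≥0∞) * ε) ≤
        ∑ f ∈ Finset.univ.filter (fun f : Fin n → Φ => Function.Injective f),
          ∏ j, P j (f j) := by
  intro n
  induction n with
  | zero =>
    intro P _
    rw [Finset.filter_true_of_mem (fun f _ => Function.injective_of_subsingleton f)]
    simp
  | succ n ih =>
    intro P hP
    classical
    set Q : Fin n → PMF Φ := fun j => P j.succ with hQ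
    have hQflat : ∀ j s, Q j s ≤ ε := fun j s => hP j.succ s
    -- rewrite sum over injective tuples as double sum
    have hbij : Function.Bijective
        (fun p : Φ × (Fin n → Φ) => (Fin.cons p.1 p.2 : Fin (n+1) → Φ)) := by
      constructor
      · rintro ⟨x, g⟩ ⟨y, h⟩ hxy
        have h1 : x = y := by
          have := congr_fun hxy 0; simpa using this
        have h2 : g = h := by
          funext j
          have := congr_fun hxy j.succ; simpa using this
        simp [h1, h2]
      · intro f
        exact ⟨(f 0, fun j => f j.succ), by
          funext j; exact Fin.cases rfl (fun i => by simp) j⟩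
    have hre : ∑ f ∈ Finset.univ.filter
          (fun f : Fin (n+1) → Φ => Function.Injective f), ∏ j, P j (f j)
        = ∑ g : Fin n → Φ, ∑ x : Φ,
            (if Function.Injective (Fin.cons x g : Fin (n+1) → Φ)
              then P 0 x * ∏ j, Q j (g j) else 0) := by
      rw [Finset.sum_filter]
      rw [← Fintype.sum_bijective _ hbij _
        (fun f => if Function.Injective f then ∏ j, P j (f j) else 0) (fun p => rfl)]
      rw [Fintype.sum_prod_type, Finset.sum_comm]
      apply Finset.sum_congr rfl; intro g _
      apply Finset.sum_congr rfl; intro x _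
      simp [Fin.prod_univ_succ, hQ]
    rw [hre, Finset.prod_range_succ]
    rw [mul_comm]
    have step : ∀ g : Fin n → Φ,
        (if Function.Injective g then (1 - (n:ℝ≥0∞) * ε) * ∏ j, Q j (g j) else 0)
        ≤ ∑ x : Φ, (if Function.Injective (Fin.cons x g : Fin (n+1) → Φ)
            then P 0 x * ∏ j, Q j (g j) else 0) := by
      intro g
      by_cases hg : Function.Injective g
      · simp only [hg, if_true]
        have hcons : ∀ x : Φ, Function.Injective (Fin.cons x g : Fin (n+1) → Φ)
            ↔ x ∉ Set.range g := by
          intro x; rw [Fin.cons_injective_iff]; simp [hg]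
        calc (1 - (n:ℝ≥0∞) * ε) * ∏ j, Q j (g j)
            ≤ (∑ x : Φ, if x ∉ Set.range g then P 0 x else 0) * ∏ j, Q j (g j) := by
              apply mul_le_mul_left
              rw [tsub_le_iff_right]
              have htot : ∑ x : Φ, P 0 x = 1 := by
                rw [← tsum_fintype (L := .unconditional _)]; exact (P 0).tsum_coe
              have hsplit : (∑ x ∈ Finset.univ.filter (fun x => x ∉ Set.range g), P 0 x)
                  + (∑ x ∈ Finset.univ.filter (fun x => ¬ x ∉ Set.range g), P 0 x)
                  = ∑ x : Φ, P 0 x := Finset.sum_filter_add_sum_filter_not _ _ _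
              have hcard : (Finset.univ.filter (fun x : Φ => ¬ x ∉ Set.range g)).card ≤ n := by
                have : Finset.univ.filter (fun x : Φ => ¬ x ∉ Set.range g)
                    = Finset.univ.image g := by
                  ext x; simp [Set.mem_range]
                rw [this]
                calc (Finset.univ.image g).card ≤ (Finset.univ : Finset (Fin n)).card :=
                      Finset.card_image_le
                  _ = n := by simp
              have hbound : (∑ x ∈ Finset.univ.filter (fun x => ¬ x ∉ Set.range g), P 0 x)
                  ≤ (n : ℝ≥0∞) * ε := by
                calc (∑ x ∈ Finset.univ.filter (fun x => ¬ x ∉ Set.range g), P 0 x)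
                    ≤ (Finset.univ.filter (fun x : Φ => ¬ x ∉ Set.range g)).card • ε :=
                      Finset.sum_le_card_nsmul _ _ _ (fun x _ => hP 0 x)
                  _ = ((Finset.univ.filter (fun x : Φ => ¬ x ∉ Set.range g)).card : ℝ≥0∞) * ε := by
                      rw [nsmul_eq_mul]
                  _ ≤ (n : ℝ≥0∞) * ε := by
                      apply mul_le_mul_left
                      exact_mod_cast hcard
              calc (1:ℝ≥0∞) = ∑ x : Φ, P 0 x := htot.symm
                _ = (∑ x ∈ Finset.univ.filter (fun x => ¬ x ∉ Set.range g), P 0 x)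
                    + (∑ x ∈ Finset.univ.filter (fun x => x ∉ Set.range g), P 0 x) := by
                    rw [← hsplit]; ring
                _ ≤ (n : ℝ≥0∞) * ε
                    + (∑ x ∈ Finset.univ.filter (fun x => x ∉ Set.range g), P 0 x) :=
                    add_le_add_left hbound _
                _ = (∑ x : Φ, if x ∉ Set.range g then P 0 x else 0) + (n:ℝ≥0∞) * ε := by
                    rw [add_comm, Finset.sum_filter]
          _ = ∑ x : Φ, (if Function.Injective (Fin.cons x g : Fin (n+1) → Φ)
                then P 0 x * ∏ j, Q j (g j) else 0) := by
              rw [Finset.sum_mul]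
              apply Finset.sum_congr rfl; intro x _
              simp only [hcons x, ite_mul, zero_mul]
      · simp only [hg, if_false]
        exact zero_le
    calc (1 - (n:ℝ≥0∞) * ε) * ∏ j ∈ Finset.range n, (1 - (j:ℝ≥0∞) * ε)
        ≤ (1 - (n:ℝ≥0∞) * ε) * ∑ g ∈ Finset.univ.filter
            (fun g : Fin n → Φ => Function.Injective g), ∏ j, Q j (g j) :=
          mul_le_mul_right (ih Q hQflat) _
      _ = ∑ g : Fin n → Φ, (if Function.Injective g
            then (1 - (n:ℝ≥0∞) * ε) * ∏ j, Q j (g j) else 0) := by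
          rw [Finset.sum_filter, Finset.mul_sum]
          apply Finset.sum_congr rfl; intro g _
          rw [mul_ite, mul_zero]
      _ ≤ _ := Finset.sum_le_sum (fun g _ => step g)

/-- Non-uniform, non-identically distributed birthday paradox: the probability that `l`
samples drawn independently, the `j`-th from an `ε`-flat distribution `P j` over a finite
sample space `Φ`, are all pairwise distinct is at least `2 ^ (-l² ε)`,
provided `l ≤ 1 + 1/(2ε)`. -/
theorem birthday_paradox_flat {Φ : Type*} [Fintype Φ] [MeasurableSpace Φ]
    [MeasurableSingletonClass Φ]
    (l : ℕ) (ε : ℝ) (hε : 0 < ε) (hl : (l : ℝ) ≤ 1 + 1 / (2 * ε))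
    (P : Fin l → PMF Φ) (hflat : ∀ j s, P j s ≤ ENNReal.ofReal ε) :
    ENNReal.ofReal ((2 : ℝ) ^ (-(l : ℝ) ^ 2 * ε)) ≤
      (Measure.pi fun j => (P j).toMeasure) {f | Function.Injective f} := by
  classical
  have hjhalf : ∀ j ∈ Finset.range l, (j:ℝ) * ε ≤ 1/2 := by
    intro j hj
    rw [Finset.mem_range] at hj
    have hj' : (j:ℝ) ≤ (l:ℝ) - 1 := by
      have : (j:ℝ) + 1 ≤ (l:ℝ) := by exact_mod_cast hj
      linarith
    have h2 : (j:ℝ) ≤ 1/(2*ε) := by linarith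
    have h3 : (j:ℝ) * ε ≤ (1/(2*ε)) * ε := mul_le_mul_of_nonneg_right h2 hε.le
    have h4 : (1/(2*ε)) * ε = 1/2 := by field_simp
    linarith
  have hnonneg : ∀ j ∈ Finset.range l, (0:ℝ) ≤ 1 - (j:ℝ) * ε := by
    intro j hj; have := hjhalf j hj; linarith
  have hsingle : ∀ f : Fin l → Φ,
      (Measure.pi fun j => (P j).toMeasure) {f} = ∏ j, P j (f j) := by
    intro f
    rw [← Set.univ_pi_singleton, Measure.pi_pi]
    apply Finset.prod_congr rfl
    intro j _
    exact PMF.toMeasure_apply_singleton _ _ (measurableSet_singleton _)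
  calc ENNReal.ofReal ((2 : ℝ) ^ (-(l : ℝ) ^ 2 * ε))
      ≤ ENNReal.ofReal (∏ j ∈ Finset.range l, (1 - (j:ℝ) * ε)) :=
        ENNReal.ofReal_le_ofReal (real_prod_bound l ε hε hl)
    _ = ∏ j ∈ Finset.range l, ENNReal.ofReal (1 - (j:ℝ) * ε) :=
        ENNReal.ofReal_prod_of_nonneg hnonneg
    _ = ∏ j ∈ Finset.range l, (1 - (j:ℝ≥0∞) * ENNReal.ofReal ε) := by
        apply Finset.prod_congr rfl
        intro j _
        rw [ENNReal.ofReal_sub _ (by positivity), ENNReal.ofReal_one,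
          ENNReal.ofReal_mul (Nat.cast_nonneg j), ENNReal.ofReal_natCast]
    _ ≤ ∑ f ∈ Finset.univ.filter (fun f : Fin l → Φ => Function.Injective f),
          ∏ j, P j (f j) := key_sum (ENNReal.ofReal ε) l P hflat
    _ = ∑ f ∈ Finset.univ.filter (fun f : Fin l → Φ => Function.Injective f),
          (Measure.pi fun j => (P j).toMeasure) {f} := by
        exact Finset.sum_congr rfl (fun f _ => (hsingle f).symm)
    _ = (Measure.pi fun j => (P j).toMeasure)
          (⋃ f ∈ Finset.univ.filter (fun f : Fin l → Φ => Function.Injective f), {f}) := by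
        rw [measure_biUnion_finset]
        · intro a _ b _ hab
          exact Set.disjoint_singleton.mpr hab
        · intro f _
          rw [← Set.univ_pi_singleton]
          exact MeasurableSet.univ_pi (fun j => measurableSet_singleton _)
    _ ≤ (Measure.pi fun j => (P j).toMeasure) {f | Function.Injective f} := by
        apply measure_mono
        intro f hf
        simp only [Set.mem_iUnion, Finset.mem_filter, Finset.mem_univ] at hf
        obtain ⟨g, ⟨_, hg⟩, hfg⟩ := hf
        simp only [Set.mem_singleton_iff] at hfg
        subst hfg
        exact hg
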